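/- Let M = {E_m}_{m∈𝒳} be a quantum instrument on a finite-dimensional Hilbert space Q and s = {p(x), ρ_x}_{x∈X} an input ensemble. Then the entropy defect of the ensemble output by the channelized instrument decomposes as χ(M(s)) = I(X:𝒳) + Σ_m p(m) χ(s̄_m), where I(X:𝒳) is the classical mutual information between the input letter and the measurement outcome and s̄_m is the conditional output ensemble given outcome m. -/

import Mathlib

open Matrix
open scoped BigOperators ComplexOrder Classical

noncomputable section

namespace QID

variable {Q Q' R A X O B : Type*}

/-- The rank-one projector `|ψ⟩⟨ψ|`. -/
def pureState (ψ : Q → ℂ) : Matrix Q Q ℂ :=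
  Matrix.vecMulVec ψ (star ψ)

/-- A density matrix: positive semidefinite with unit trace. -/
def IsDensity [Fintype Q] (ρ : Matrix Q Q ℂ) : Prop :=
  ρ.PosSemidef ∧ ρ.trace = 1

/-- Square root of a positive semidefinite matrix (junk value `0` otherwise). -/
def sqrtPSD [Fintype Q] [DecidableEq Q] (M : Matrix Q Q ℂ) : Matrix Q Q ℂ :=
  if h : M.PosSemidef then
    (h.1.eigenvectorUnitary : Matrix Q Q ℂ) * diagonal ((↑) ∘ Real.sqrt ∘ h.1.eigenvalues) *
      (star h.1.eigenvectorUnitary : Matrix Q Q ℂ) else 0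

/-- The trace norm `‖M‖₁ = Tr √(MᴴM)`. -/
def traceNorm [Fintype Q] [DecidableEq Q] (M : Matrix Q Q ℂ) : ℝ :=
  (sqrtPSD (Mᴴ * M)).trace.re

/-- The fidelity `F(ρ,σ) = (Tr|√ρ√σ|)²`. -/
def fidelity [Fintype Q] [DecidableEq Q] (ρ σ : Matrix Q Q ℂ) : ℝ :=
  (traceNorm (sqrtPSD ρ * sqrtPSD σ)) ^ 2

/-- The von Neumann entropy `S(ρ) = -Tr[ρ log₂ ρ]` (base two), computed through
the eigenvalues of `ρ`; junk value `0` if `ρ` is not Hermitian. -/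
def entropy [Fintype Q] [DecidableEq Q] (ρ : Matrix Q Q ℂ) : ℝ :=
  if h : ρ.IsHermitian then (∑ i, Real.negMulLog (h.eigenvalues i)) / Real.log 2 else 0

/-- The entropy defect (Holevo quantity) `χ(s) = S(ρ_s) - ∑ₓ p(x) S(ρₓ)` of an ensemble. -/
def entropyDefect [Fintype Q] [DecidableEq Q] [Fintype X]
    (p : X → ℝ) (ρ : X → Matrix Q Q ℂ) : ℝ :=
  entropy (∑ x, (p x : ℂ) • ρ x) - ∑ x, p x * entropy (ρ x)

/-- The action of `id_R ⊗ Φ` on a bipartite matrix. -/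
def idTensor (Φ : Matrix Q Q ℂ →ₗ[ℂ] Matrix Q' Q' ℂ)
    (M : Matrix (R × Q) (R × Q) ℂ) : Matrix (R × Q') (R × Q') ℂ :=
  fun p q => Φ (Matrix.of fun a b => M (p.1, a) (q.1, b)) p.2 q.2

/-- Complete positivity: every ampliation `id_{Fin k} ⊗ Φ` preserves positive semidefiniteness. -/
def IsCompletelyPositive [Fintype Q] [Fintype Q']
    (Φ : Matrix Q Q ℂ →ₗ[ℂ] Matrix Q' Q' ℂ) : Prop :=
  ∀ (k : ℕ) (M : Matrix (Fin k × Q) (Fin k × Q) ℂ),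
    M.PosSemidef → (idTensor Φ M).PosSemidef

def IsTracePreserving [Fintype Q] [Fintype Q']
    (Φ : Matrix Q Q ℂ →ₗ[ℂ] Matrix Q' Q' ℂ) : Prop :=
  ∀ M : Matrix Q Q ℂ, (Φ M).trace = M.trace

/-- A channel: a completely positive trace-preserving linear map. -/
def IsChannel [Fintype Q] [Fintype Q']
    (Φ : Matrix Q Q ℂ →ₗ[ℂ] Matrix Q' Q' ℂ) : Prop :=
  IsCompletelyPositive Φ ∧ IsTracePreserving Φ

/-- A quantum instrument: a family of completely positive maps summing up to a
trace-preserving map. -/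
def IsInstrument [Fintype Q] [Fintype Q'] [Fintype O]
    (E : O → (Matrix Q Q ℂ →ₗ[ℂ] Matrix Q' Q' ℂ)) : Prop :=
  (∀ m, IsCompletelyPositive (E m)) ∧
    ∀ M : Matrix Q Q ℂ, (∑ m, E m M).trace = M.trace

/-- Partial trace over the first tensor factor. -/
def ptraceL [Fintype R] (M : Matrix (R × Q) (R × Q) ℂ) : Matrix Q Q ℂ :=
  fun a b => ∑ i, M (i, a) (i, b)

/-- Partial trace over the second tensor factor. -/
def ptraceRt [Fintype Q] (M : Matrix (R × Q) (R × Q) ℂ) : Matrix R R ℂ :=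
  fun i j => ∑ a, M (i, a) (j, a)

/-- `Ψ` (a vector on `R × Q`, reference first) purifies the state `ρ` on `Q`. -/
def IsPurification [Fintype R] (ρ : Matrix Q Q ℂ) (Ψ : R × Q → ℂ) : Prop :=
  ptraceL (pureState Ψ) = ρ

/-- The channelized instrument `ρ ↦ ∑ₘ Eₘ(ρ) ⊗ |m⟩⟨m|`, acting `Q → Q' ⊗ 𝒳`. -/
def instrApply [DecidableEq O] (E : O → (Matrix Q Q ℂ →ₗ[ℂ] Matrix Q' Q' ℂ))
    (ρ : Matrix Q Q ℂ) : Matrix (Q' × O) (Q' × O) ℂ :=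
  fun p q => if p.2 = q.2 then E p.2 ρ p.1 q.1 else 0

/-- The action of `id_R ⊗ M` for the channelized instrument `M` on a bipartite matrix. -/
def instrApplyRef [DecidableEq O] (E : O → (Matrix Q Q ℂ →ₗ[ℂ] Matrix Q' Q' ℂ))
    (M : Matrix (R × Q) (R × Q) ℂ) : Matrix (R × Q' × O) (R × Q' × O) ℂ :=
  fun p q => if p.2.2 = q.2.2 then
    E p.2.2 (Matrix.of fun a b => M (p.1, a) (q.1, b)) p.2.1 q.2.1 else 0

/-- The coherent information `I_c^{R→B}(ρ^{RB}) = S(ρ^B) - S(ρ^{RB})`. -/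
def cohInfo [Fintype R] [DecidableEq R] [Fintype B] [DecidableEq B]
    (M : Matrix (R × B) (R × B) ℂ) : ℝ :=
  entropy (ptraceL M) - entropy M

/-- The quantum disturbance `δ(ρ,M) = S(ρ) - I_c^{R→Q'𝒳}((id_R ⊗ M)(Ψ))` of an
instrument, w.r.t. a purification `Ψ` of `ρ`. -/
def qDisturbance [Fintype Q] [DecidableEq Q] [Fintype Q'] [DecidableEq Q']
    [Fintype R] [DecidableEq R] [Fintype O] [DecidableEq O]
    (ρ : Matrix Q Q ℂ) (E : O → (Matrix Q Q ℂ →ₗ[ℂ] Matrix Q' Q' ℂ))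
    (Ψ : R × Q → ℂ) : ℝ :=
  entropy ρ - cohInfo (instrApplyRef E (pureState Ψ))

/-- The quantum disturbance (coherent information loss)
`δ(ρ,E) = S(ρ) - I_c^{R→Q'}((id_R ⊗ E)(Ψ))` of a channel. -/
def qDisturbanceChan [Fintype Q] [DecidableEq Q] [Fintype Q'] [DecidableEq Q']
    [Fintype R] [DecidableEq R]
    (ρ : Matrix Q Q ℂ) (E : Matrix Q Q ℂ →ₗ[ℂ] Matrix Q' Q' ℂ)
    (Ψ : R × Q → ℂ) : ℝ :=
  entropy ρ - cohInfo (idTensor E (pureState Ψ))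

/-- The quantum information gain `ι(ρ,M) = S(ρ^R) - ∑ₘ p(m) S(τ^R_m)`. -/
def qInfoGain [Fintype Q] [DecidableEq Q] [Fintype Q'] [DecidableEq Q']
    [Fintype R] [DecidableEq R] [Fintype O]
    (E : O → (Matrix Q Q ℂ →ₗ[ℂ] Matrix Q' Q' ℂ)) (Ψ : R × Q → ℂ) : ℝ :=
  entropy (ptraceRt (pureState Ψ)) -
    ∑ m, ((E m (ptraceL (pureState Ψ))).trace.re) *
      entropy ((((E m (ptraceL (pureState Ψ))).trace.re)⁻¹ : ℝ) •
        ptraceRt (idTensor (E m) (pureState Ψ)))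

/-- The corrected average output fidelity of an instrument on an ensemble:
`F_av(s,M) = sup over families of correcting channels {R_m} of
∑ₓ p(x) F(∑ₘ R_m(E_m(ρₓ)), ρₓ)`. -/
def avgFid [Fintype Q] [DecidableEq Q] [Fintype Q'] [Fintype X] [Fintype O]
    (p : X → ℝ) (ρ : X → Matrix Q Q ℂ)
    (E : O → (Matrix Q Q ℂ →ₗ[ℂ] Matrix Q' Q' ℂ)) : ℝ :=
  ⨆ Rf : {Rf : O → (Matrix Q' Q' ℂ →ₗ[ℂ] Matrix Q Q ℂ) // ∀ m, IsChannel (Rf m)},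
    ∑ x, p x * fidelity (∑ m, Rf.1 m (E m (ρ x))) (ρ x)

/-- The corrected average output fidelity of a channel on an ensemble:
`F_av(s,E) = sup over correcting channels R of ∑ₓ p(x) F(R(E(ρₓ)), ρₓ)`. -/
def avgFidChan [Fintype Q] [DecidableEq Q] [Fintype Q'] [Fintype X]
    (p : X → ℝ) (ρ : X → Matrix Q Q ℂ)
    (E : Matrix Q Q ℂ →ₗ[ℂ] Matrix Q' Q' ℂ) : ℝ :=
  ⨆ Rc : {Rc : Matrix Q' Q' ℂ →ₗ[ℂ] Matrix Q Q ℂ // IsChannel Rc},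
    ∑ x, p x * fidelity (Rc.1 (E (ρ x))) (ρ x)

/-- The corrected entanglement fidelity of an instrument w.r.t. a purification `Ψ`:
`F_e(ρ,M) = sup over families of correcting channels {R_m} of
F(∑ₘ (id_R ⊗ R_m ∘ E_m)(Ψ), Ψ)`. -/
def entFid [Fintype Q] [DecidableEq Q] [Fintype Q'] [Fintype R] [DecidableEq R] [Fintype O]
    (Ψ : R × Q → ℂ) (E : O → (Matrix Q Q ℂ →ₗ[ℂ] Matrix Q' Q' ℂ)) : ℝ :=
  ⨆ Rf : {Rf : O → (Matrix Q' Q' ℂ →ₗ[ℂ] Matrix Q Q ℂ) // ∀ m, IsChannel (Rf m)},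
    fidelity (∑ m, idTensor (Rf.1 m ∘ₗ E m) (pureState Ψ)) (pureState Ψ)

/-- A POVM: positive operators summing to the identity. -/
def IsPOVM [Fintype Q] [DecidableEq Q] [Fintype O] (P : O → Matrix Q Q ℂ) : Prop :=
  (∀ m, (P m).PosSemidef) ∧ ∑ m, P m = 1

/-- The classical mutual information `I(X:O)` of the joint distribution
`p(x,m) = p(x) Tr[ρₓ P_m]` generated by measuring the ensemble with the POVM `P`. -/
def povmMutualInfo [Fintype Q] [Fintype X] [Fintype O]
    (p : X → ℝ) (ρ : X → Matrix Q Q ℂ) (P : O → Matrix Q Q ℂ) : ℝ :=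
  ∑ x, ∑ m, p x * (ρ x * P m).trace.re *
    Real.logb 2 ((ρ x * P m).trace.re / (∑ x', p x' * (ρ x' * P m).trace.re))

/-- The accessible information: supremum of the mutual information over all POVMs. -/
def accInfo [Fintype Q] [DecidableEq Q] [Fintype X]
    (p : X → ℝ) (ρ : X → Matrix Q Q ℂ) : ℝ :=
  ⨆ k : ℕ, ⨆ P : {P : Fin k → Matrix Q Q ℂ // IsPOVM P}, povmMutualInfo p ρ P.1

/-- The minimum overlap `min_{1 ≤ i ≤ N-1} |⟨ψ_{x_i}|ψ_{x_{i+1}}⟩|` along a path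
`x : Fin N → X` of signals. -/
def pathMin [Fintype Q] (ψ : X → Q → ℂ) {N : ℕ} (x : Fin N → X) : ℝ :=
  ⨅ i : Fin (N - 1),
    ‖(star (ψ (x (Fin.castLE (Nat.sub_le N 1) i))) ⬝ᵥ
      ψ (x ⟨i.1 + 1, by have := i.isLt; omega⟩))‖

/-- `η(s)`: the supremum over all complete (surjective) paths of the minimum
consecutive overlap divided by the length of the path. -/
def eta [Fintype Q] (ψ : X → Q → ℂ) : ℝ :=
  ⨆ N : ℕ, ⨆ x : {x : Fin N → X // Function.Surjective x}, pathMin ψ x.1 / N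

/-- `ζ(s) = η(s) · minₓ p(x)`; the ensemble is irreducible iff `ζ(s) > 0`. -/
def zeta [Fintype Q] [Fintype X] (p : X → ℝ) (ψ : X → Q → ℂ) : ℝ :=
  eta ψ * ⨅ x, p x

/-- `Tr_R[(φ ⊗ 1_Q)|Ψ⟩⟨Ψ|]` for an operator `φ` on the reference system. -/
def refOp [Fintype R] (φ : Matrix R R ℂ) (Ψ : R × Q → ℂ) : Matrix Q Q ℂ :=
  fun a b => ∑ i, ∑ k, φ i k * Ψ (k, a) * star (Ψ (i, b))



/-! ### Auxiliary machinery for Statement 12 -/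

section Stmt12Aux

set_option linter.unusedSectionVars false

open Polynomial in
lemma aux12_charpoly_diagonal {n : Type*} [Fintype n] [DecidableEq n] (v : n → ℂ) :
    (Matrix.diagonal v).charpoly = ∏ i, (Polynomial.X - Polynomial.C (v i)) := by
  have h : charmatrix (Matrix.diagonal v)
      = Matrix.diagonal (fun i => (Polynomial.X : ℂ[X]) - Polynomial.C (v i)) := by
    ext i j
    by_cases h : i = j
    · subst h; simp
    · simp [Matrix.charmatrix_apply_ne _ _ _ h, Matrix.diagonal_apply_ne _ h]
  rw [Matrix.charpoly, h, Matrix.det_diagonal]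

open Polynomial in
lemma aux12_charpoly_unitary_conj {n : Type*} [Fintype n] [DecidableEq n]
    (U M : Matrix n n ℂ) (hU : U * Uᴴ = 1) :
    (U * M * Uᴴ).charpoly = M.charpoly := by
  let f : Matrix n n ℂ →+* Matrix n n ℂ[X] := (Polynomial.C : ℂ →+* ℂ[X]).mapMatrix
  have hscal : (Matrix.scalar n (Polynomial.X : ℂ[X])) = (Polynomial.X : ℂ[X]) • (1 : Matrix n n ℂ[X]) := by
    rw [Matrix.scalar_apply]
    ext i j
    by_cases h : i = j <;> simp [Matrix.diagonal_apply, Matrix.one_apply, h]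
  have key : charmatrix (U * M * Uᴴ) = f U * charmatrix M * f Uᴴ := by
    unfold Matrix.charmatrix
    rw [mul_sub, sub_mul, RingHom.map_mul f, RingHom.map_mul f U M, hscal]
    congr 1
    rw [mul_smul_comm, smul_mul_assoc, mul_one, ← RingHom.map_mul f, hU, RingHom.map_one]
  have h1 : f Uᴴ * f U = 1 := by
    rw [← RingHom.map_mul f, mul_eq_one_comm.mp hU, RingHom.map_one]
  have hdet : (f Uᴴ).det * (f U).det = 1 := by
    rw [← Matrix.det_mul, h1, Matrix.det_one]
  rw [Matrix.charpoly, key, Matrix.det_mul, Matrix.det_mul, Matrix.charpoly,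
    mul_comm, ← mul_assoc, hdet, one_mul]

open Polynomial in
lemma aux12_eig_sum {n : Type*} [Fintype n] [DecidableEq n]
    {M : Matrix n n ℂ} (hA : M.IsHermitian)
    (U : Matrix n n ℂ) (d : n → ℝ) (hU : U * Uᴴ = 1)
    (hAd : M = U * Matrix.diagonal (Complex.ofReal ∘ d) * Uᴴ) (f : ℝ → ℝ) :
    ∑ i, f (hA.eigenvalues i) = ∑ i, f (d i) := by
  set e := hA.eigenvalues with he
  have hV : M = (hA.eigenvectorUnitary : Matrix n n ℂ) *
      Matrix.diagonal (Complex.ofReal ∘ e) * (hA.eigenvectorUnitary : Matrix n n ℂ)ᴴ := by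
    simpa [Matrix.star_eq_conjTranspose] using hA.spectral_theorem
  have hVU : (hA.eigenvectorUnitary : Matrix n n ℂ) *
      (hA.eigenvectorUnitary : Matrix n n ℂ)ᴴ = 1 := by
    simpa [Matrix.star_eq_conjTranspose] using
      (Matrix.mem_unitaryGroup_iff).mp hA.eigenvectorUnitary.2
  have h1 : M.charpoly = ∏ i, (Polynomial.X - Polynomial.C ((d i : ℂ))) := by
    rw [hAd, aux12_charpoly_unitary_conj _ _ hU, aux12_charpoly_diagonal]
    rfl
  have h2 : M.charpoly = ∏ i, (Polynomial.X - Polynomial.C ((e i : ℂ))) := by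
    rw [hV, aux12_charpoly_unitary_conj _ _ hVU, aux12_charpoly_diagonal]
    rfl
  have hprod : ∀ g : n → ℂ, (∏ i, (Polynomial.X - Polynomial.C (g i))) =
      ((Finset.univ.val.map g).map (fun a => Polynomial.X - Polynomial.C a)).prod := by
    intro g
    rw [Multiset.map_map, Finset.prod_eq_multiset_prod]
    rfl
  have hroots : Finset.univ.val.map (fun i => ((d i : ℂ))) =
      Finset.univ.val.map (fun i => ((e i : ℂ))) := by
    have h3 := congrArg Polynomial.roots (h1.symm.trans h2)
    rwa [hprod, hprod, Polynomial.roots_multiset_prod_X_sub_C,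
      Polynomial.roots_multiset_prod_X_sub_C] at h3
  have hmul : Finset.univ.val.map d = Finset.univ.val.map e := by
    apply Multiset.map_injective (Complex.ofReal_injective)
    rw [Multiset.map_map, Multiset.map_map]
    exact hroots
  calc ∑ i, f (e i) = ((Finset.univ.val.map e).map f).sum := by
        rw [Multiset.map_map]; rfl
    _ = ((Finset.univ.val.map d).map f).sum := by rw [hmul]
    _ = ∑ i, f (d i) := by rw [Multiset.map_map]; rfl

variable {q o : Type*} [Fintype q] [DecidableEq q] [Fintype o] [DecidableEq o]

/-- A block-diagonal matrix with blocks indexed by the second component. -/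
def aux12_blockish (F : o → Matrix q q ℂ) : Matrix (q × o) (q × o) ℂ :=
  fun p r => if p.2 = r.2 then F p.2 p.1 r.1 else 0

lemma aux12_blockish_mul (F G : o → Matrix q q ℂ) :
    aux12_blockish F * aux12_blockish G = aux12_blockish (fun m => F m * G m) := by
  ext ⟨a, m⟩ ⟨b, nn⟩
  simp only [aux12_blockish, Matrix.mul_apply, Fintype.sum_prod_type]
  rw [Finset.sum_comm]
  simp only [ite_mul, mul_ite, zero_mul, mul_zero]
  by_cases h : m = nn
  · subst h
    rw [Finset.sum_eq_single m]
    · simp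
    · intro k _ hk
      apply Finset.sum_eq_zero
      intro c _
      simp [Ne.symm hk]
    · intro habs
      exact absurd (Finset.mem_univ m) habs
  · rw [if_neg h]
    apply Finset.sum_eq_zero
    intro k _
    apply Finset.sum_eq_zero
    intro c _
    by_cases hk : m = k
    · subst hk; simp [h]
    · simp [hk]

lemma aux12_blockish_conjTranspose (F : o → Matrix q q ℂ) :
    (aux12_blockish F)ᴴ = aux12_blockish (fun m => (F m)ᴴ) := by
  ext ⟨a, m⟩ ⟨b, nn⟩
  simp only [aux12_blockish, Matrix.conjTranspose_apply]
  by_cases h : m = nn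
  · subst h; simp
  · simp [h, Ne.symm h]

lemma aux12_blockish_one : aux12_blockish (fun _ : o => (1 : Matrix q q ℂ)) = 1 := by
  ext ⟨a, m⟩ ⟨b, nn⟩
  simp only [aux12_blockish, Matrix.one_apply, Prod.mk.injEq]
  by_cases h : m = nn
  · subst h
    by_cases h2 : a = b <;> simp [h2]
  · simp [h]

lemma aux12_blockish_diagonal (v : o → q → ℝ) :
    aux12_blockish (fun m => Matrix.diagonal (Complex.ofReal ∘ v m)) =
      Matrix.diagonal (Complex.ofReal ∘ (fun p : q × o => v p.2 p.1)) := by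
  ext ⟨a, m⟩ ⟨b, nn⟩
  simp only [aux12_blockish, Matrix.diagonal_apply, Prod.mk.injEq, Function.comp_apply]
  by_cases h : m = nn
  · subst h
    by_cases h2 : a = b <;> simp [h2]
  · simp [h]

lemma aux12_blockish_congr {F G : o → Matrix q q ℂ} (h : ∀ m, F m = G m) :
    aux12_blockish F = aux12_blockish G := by
  have : F = G := funext h
  rw [this]

lemma aux12_blockish_isHermitian {F : o → Matrix q q ℂ} (hF : ∀ m, (F m).IsHermitian) :
    (aux12_blockish F).IsHermitian := by
  unfold Matrix.IsHermitian
  rw [aux12_blockish_conjTranspose]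
  exact aux12_blockish_congr fun m => (hF m).eq

lemma aux12_blockish_eigsum {F : o → Matrix q q ℂ} (hF : ∀ m, (F m).IsHermitian)
    (hA : (aux12_blockish F).IsHermitian) (f : ℝ → ℝ) :
    ∑ i, f (hA.eigenvalues i) = ∑ m, ∑ a, f ((hF m).eigenvalues a) := by
  have hstep := aux12_eig_sum hA
    (aux12_blockish (fun m => ((hF m).eigenvectorUnitary : Matrix q q ℂ)))
    (fun p : q × o => (hF p.2).eigenvalues p.1) ?_ ?_ f
  · rw [hstep, Fintype.sum_prod_type, Finset.sum_comm]
  · rw [aux12_blockish_conjTranspose, aux12_blockish_mul, ← aux12_blockish_one]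
    apply aux12_blockish_congr
    intro m
    simpa [Matrix.star_eq_conjTranspose] using
      (Matrix.mem_unitaryGroup_iff).mp (hF m).eigenvectorUnitary.2
  · rw [← aux12_blockish_diagonal (fun m => (hF m).eigenvalues),
      aux12_blockish_conjTranspose, aux12_blockish_mul, aux12_blockish_mul]
    apply aux12_blockish_congr
    intro m
    simpa [Matrix.star_eq_conjTranspose] using (hF m).spectral_theorem

lemma aux12_trace_eq_sum_eigs {n : Type*} [Fintype n] [DecidableEq n]
    {M : Matrix n n ℂ} (hA : M.IsHermitian) :
    M.trace = ∑ i, ((hA.eigenvalues i : ℂ)) := by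
  conv_lhs => rw [hA.spectral_theorem]
  rw [Unitary.conjStarAlgAut_apply, Matrix.trace_mul_cycle]
  rw [Unitary.coe_star_mul_self hA.eigenvectorUnitary, one_mul, Matrix.trace_diagonal]
  rfl

lemma aux12_traceRe_eq_sum_eigs {n : Type*} [Fintype n] [DecidableEq n]
    {M : Matrix n n ℂ} (hA : M.IsHermitian) :
    M.trace.re = ∑ i, hA.eigenvalues i := by
  rw [aux12_trace_eq_sum_eigs hA, ← Complex.ofReal_sum, Complex.ofReal_re]

lemma aux12_traceRe_nonneg {n : Type*} [Fintype n] [DecidableEq n]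
    {M : Matrix n n ℂ} (hA : M.PosSemidef) : 0 ≤ M.trace.re := by
  rw [aux12_traceRe_eq_sum_eigs hA.1]
  exact Finset.sum_nonneg fun i _ => hA.eigenvalues_nonneg i

lemma aux12_trace_eq_re {n : Type*} [Fintype n] [DecidableEq n]
    {M : Matrix n n ℂ} (hA : M.IsHermitian) :
    M.trace = ((M.trace.re : ℝ) : ℂ) := by
  rw [aux12_trace_eq_sum_eigs hA, ← Complex.ofReal_sum, Complex.ofReal_re]

lemma aux12_realSmul_eq {n : Type*} [Fintype n] (c : ℝ) (M : Matrix n n ℂ) :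
    c • M = ((c : ℂ)) • M := by
  ext i j
  simp [Complex.real_smul]

lemma aux12_isHermitian_realSmul {n : Type*} [Fintype n] {M : Matrix n n ℂ}
    (hB : M.IsHermitian) (c : ℝ) : (((c : ℂ)) • M).IsHermitian := by
  unfold Matrix.IsHermitian
  rw [Matrix.conjTranspose_smul, hB.eq]
  congr 1
  simp

lemma aux12_smul_eigsum {n : Type*} [Fintype n] [DecidableEq n] {M : Matrix n n ℂ}
    (hB : M.IsHermitian) (c : ℝ)
    (h2 : (((c : ℂ)) • M).IsHermitian) (f : ℝ → ℝ) :
    ∑ i, f (h2.eigenvalues i) = ∑ i, f (c * hB.eigenvalues i) := by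
  apply aux12_eig_sum h2 (hB.eigenvectorUnitary : Matrix n n ℂ) (fun i => c * hB.eigenvalues i)
  · simpa [Matrix.star_eq_conjTranspose] using
      (Matrix.mem_unitaryGroup_iff).mp hB.eigenvectorUnitary.2
  · conv_lhs => rw [hB.spectral_theorem]
    rw [Unitary.conjStarAlgAut_apply, Matrix.star_eq_conjTranspose, ← smul_mul_assoc, ← mul_smul_comm, ← Matrix.diagonal_smul]
    have hv : ((c : ℂ)) • (RCLike.ofReal ∘ hB.eigenvalues : n → ℂ) =
        (Complex.ofReal ∘ fun i => c * hB.eigenvalues i) := by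
      funext i
      show (c : ℂ) • (RCLike.ofReal (hB.eigenvalues i) : ℂ) = _
      simp [smul_eq_mul]
    rw [hv]

lemma aux12_entropy_blockish (F : o → Matrix q q ℂ) (hF : ∀ m, (F m).PosSemidef) :
    entropy (aux12_blockish F) =
      ∑ m, ((F m).trace.re * entropy ((((F m).trace.re)⁻¹ : ℝ) • F m)
        + Real.negMulLog ((F m).trace.re) / Real.log 2) := by
  have hH : ∀ m, (F m).IsHermitian := fun m => (hF m).1
  have hA : (aux12_blockish F).IsHermitian := aux12_blockish_isHermitian hH
  rw [entropy, dif_pos hA, aux12_blockish_eigsum hH hA, Finset.sum_div]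
  apply Finset.sum_congr rfl
  intro m _
  set t := (F m).trace.re with htdef
  have hts : t = ∑ a, (hH m).eigenvalues a := aux12_traceRe_eq_sum_eigs (hH m)
  have hnn : ∀ a, 0 ≤ (hH m).eigenvalues a := fun a => (hF m).eigenvalues_nonneg a
  rcases eq_or_ne t 0 with ht0 | htne
  · have hz : ∀ a ∈ Finset.univ, (hH m).eigenvalues a = 0 := by
      intro a ha
      exact (Finset.sum_eq_zero_iff_of_nonneg (fun a _ => hnn a)).mp (by rw [← hts, ht0]) a ha
    rw [ht0]
    rw [Finset.sum_congr rfl fun a ha => by rw [hz a ha, Real.negMulLog_zero]]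
    simp
  · have hherm : ((((t⁻¹ : ℝ)) : ℂ) • F m).IsHermitian := aux12_isHermitian_realSmul (hH m) _
    have hent : entropy (((t⁻¹ : ℝ)) • F m)
        = (∑ a, Real.negMulLog (t⁻¹ * (hH m).eigenvalues a)) / Real.log 2 := by
      rw [aux12_realSmul_eq, entropy, dif_pos hherm, aux12_smul_eigsum (hH m) _ hherm]
    rw [hent]
    have hsum1 : ∑ a, t⁻¹ * (hH m).eigenvalues a = 1 := by
      rw [← Finset.mul_sum, ← hts, inv_mul_cancel₀ htne]
    have hkey : ∑ a, Real.negMulLog ((hH m).eigenvalues a)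
        = t * ∑ a, Real.negMulLog (t⁻¹ * (hH m).eigenvalues a) + Real.negMulLog t := by
      have hpt : ∀ a, Real.negMulLog ((hH m).eigenvalues a)
          = t * Real.negMulLog (t⁻¹ * (hH m).eigenvalues a)
            + (t⁻¹ * (hH m).eigenvalues a) * Real.negMulLog t := by
        intro a
        have h1 : (hH m).eigenvalues a = t * (t⁻¹ * (hH m).eigenvalues a) := by
          field_simp
        calc Real.negMulLog ((hH m).eigenvalues a)
            = Real.negMulLog (t * (t⁻¹ * (hH m).eigenvalues a)) := by rw [← h1]
          _ = _ := by rw [Real.negMulLog_mul]; ring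
      rw [Finset.sum_congr rfl fun a _ => hpt a, Finset.sum_add_distrib, ← Finset.sum_mul,
        hsum1, one_mul, ← Finset.mul_sum]
    rw [hkey, add_div, mul_div_assoc]

lemma aux12_cp_posSemidef {q q' : Type*} [Fintype q] [DecidableEq q] [Fintype q']
    (Φ : Matrix q q ℂ →ₗ[ℂ] Matrix q' q' ℂ) (hΦ : IsCompletelyPositive Φ)
    {σ : Matrix q q ℂ} (hσ : σ.PosSemidef) : (Φ σ).PosSemidef := by
  have hM : (σ.submatrix (Prod.snd : Fin 1 × q → q) (Prod.snd : Fin 1 × q → q)).PosSemidef :=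
    hσ.submatrix _
  have h2 := hΦ 1 _ hM
  have h3 : Φ σ = (idTensor Φ (σ.submatrix Prod.snd Prod.snd)).submatrix
      (fun a => ((0 : Fin 1), a)) (fun a => ((0 : Fin 1), a)) := rfl
  rw [h3]
  exact h2.submatrix _

lemma aux12_psd_smul {n : Type*} [Fintype n] {σ : Matrix n n ℂ} (hσ : σ.PosSemidef)
    {c : ℝ} (hc : 0 ≤ c) : (((c : ℂ)) • σ).PosSemidef := by
  constructor
  · unfold Matrix.IsHermitian
    rw [Matrix.conjTranspose_smul, hσ.1.eq]
    congr 1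
    simp
  · intro v
    exact (hσ.smul (show (0:ℂ) ≤ (c:ℂ) by exact_mod_cast hc)).2 v

lemma aux12_psd_add {n : Type*} [Fintype n] {M N : Matrix n n ℂ}
    (hA : M.PosSemidef) (hB : N.PosSemidef) : (M + N).PosSemidef := by
  constructor
  · unfold Matrix.IsHermitian
    rw [Matrix.conjTranspose_add, hA.1.eq, hB.1.eq]
  · intro v
    exact (hA.add hB).2 v

lemma aux12_psd_sum {n x : Type*} [Fintype n] [Fintype x] (f : x → Matrix n n ℂ)
    (hf : ∀ i, (f i).PosSemidef) : (∑ i, f i).PosSemidef := by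
  classical
  exact Finset.sum_induction f Matrix.PosSemidef (fun a b ha hb => aux12_psd_add ha hb)
    Matrix.PosSemidef.zero (fun i _ => hf i)

lemma aux12_info_identity {x o : Type*} [Fintype x] [Fintype o]
    (p : x → ℝ) (pmx : x → o → ℝ) (pm : o → ℝ)
    (hp : ∀ i, 0 < p i)
    (hnn : ∀ i m, 0 ≤ pmx i m)
    (hpm : ∀ m, pm m = ∑ i, p i * pmx i m) :
    ∑ m, Real.negMulLog (pm m) / Real.log 2
      - ∑ i, p i * ∑ m, Real.negMulLog (pmx i m) / Real.log 2
    = ∑ i, ∑ m, p i * pmx i m * Real.logb 2 (pmx i m / pm m) := by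
  have hterm : ∀ i m, p i * pmx i m * Real.logb 2 (pmx i m / pm m)
      = (-(p i * Real.negMulLog (pmx i m)) - p i * pmx i m * Real.log (pm m)) / Real.log 2 := by
    intro i m
    rcases eq_or_lt_of_le (hnn i m) with h0 | hpos
    · rw [← h0]; simp
    · have hpmpos : 0 < pm m := by
        rw [hpm m]
        exact lt_of_lt_of_le (mul_pos (hp i) hpos)
          (Finset.single_le_sum (fun i' _ => mul_nonneg (hp i').le (hnn i' m))
            (Finset.mem_univ i))
      rw [Real.logb, Real.log_div (ne_of_gt hpos) (ne_of_gt hpmpos), Real.negMulLog]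
      ring
  have h1 : ∀ m, Real.negMulLog (pm m) = -∑ i, p i * pmx i m * Real.log (pm m) := by
    intro m
    have hg : pm m * Real.log (pm m) = ∑ i, p i * pmx i m * Real.log (pm m) := by
      rw [hpm m, Finset.sum_mul]
    rw [Real.negMulLog, neg_mul, hg]
  have h2 : ∀ i, p i * ∑ m, Real.negMulLog (pmx i m) / Real.log 2
      = ∑ m, p i * Real.negMulLog (pmx i m) / Real.log 2 := by
    intro i
    rw [Finset.mul_sum]
    exact Finset.sum_congr rfl fun m _ => by ring
  rw [Finset.sum_congr rfl fun i (_ : i ∈ Finset.univ) =>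
      Finset.sum_congr rfl fun m (_ : m ∈ Finset.univ) => hterm i m,
    Finset.sum_congr rfl fun m (_ : m ∈ Finset.univ) => congrArg (· / Real.log 2) (h1 m),
    Finset.sum_congr rfl fun i (_ : i ∈ Finset.univ) => h2 i]
  simp only [neg_div, Finset.sum_div, Finset.sum_neg_distrib, sub_div, Finset.sum_sub_distrib]
  rw [Finset.sum_comm (s := (Finset.univ : Finset o))]
  ring

lemma aux12_final_arith {x o : Type*} [Fintype x] [Fintype o]
    (p : x → ℝ) (pmx : x → o → ℝ) (pm : o → ℝ) (S : o → ℝ) (CC : x → o → ℝ) (I L : ℝ)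
    (hc : ∀ m, pm m * ∑ i, (p i * pmx i m / pm m) * CC i m = ∑ i, p i * pmx i m * CC i m)
    (hI' : ∑ m, Real.negMulLog (pm m) / L - ∑ i, p i * ∑ m, Real.negMulLog (pmx i m) / L = I) :
    (∑ m, (pm m * S m + Real.negMulLog (pm m) / L))
      - ∑ i, p i * ∑ m, (pmx i m * CC i m + Real.negMulLog (pmx i m) / L)
    = I + ∑ m, pm m * (S m - ∑ i, (p i * pmx i m / pm m) * CC i m) := by
  have hR : ∑ m, pm m * (S m - ∑ i, (p i * pmx i m / pm m) * CC i m)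
      = ∑ m, pm m * S m - ∑ m, ∑ i, p i * pmx i m * CC i m := by
    rw [← Finset.sum_sub_distrib]
    exact Finset.sum_congr rfl fun m _ => by rw [mul_sub, hc m]
  have hsplit1 : ∑ m, (pm m * S m + Real.negMulLog (pm m) / L)
      = (∑ m, pm m * S m) + ∑ m, Real.negMulLog (pm m) / L := Finset.sum_add_distrib
  have hsplit2 : ∑ i, p i * ∑ m, (pmx i m * CC i m + Real.negMulLog (pmx i m) / L)
      = (∑ m, ∑ i, p i * pmx i m * CC i m) + ∑ i, p i * ∑ m, Real.negMulLog (pmx i m) / L := by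
    have hx : ∀ i, p i * ∑ m, (pmx i m * CC i m + Real.negMulLog (pmx i m) / L)
        = (∑ m, p i * pmx i m * CC i m) + p i * ∑ m, Real.negMulLog (pmx i m) / L := by
      intro i
      rw [Finset.sum_add_distrib, mul_add, Finset.mul_sum]
      congr 1
      exact Finset.sum_congr rfl fun m _ => by ring
    rw [Finset.sum_congr rfl fun i (_ : i ∈ Finset.univ) => hx i, Finset.sum_add_distrib,
      Finset.sum_comm]
  rw [hsplit1, hsplit2, hR]
  linarith [hI']

end Stmt12Aux

/-- The entropy defect of the ensemble output by the channelized
instrument decomposes as `χ(M(s)) = I(X:𝒳) + ∑ₘ p(m) χ(s̄ₘ)`. -/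
theorem entropyDefect_output_decomposition
    {Q Q' O X : Type*} [Fintype Q] [DecidableEq Q] [Fintype Q'] [DecidableEq Q']
    [Fintype O] [DecidableEq O] [Fintype X]
    (E : O → (Matrix Q Q ℂ →ₗ[ℂ] Matrix Q' Q' ℂ)) (hE : IsInstrument E)
    (p : X → ℝ) (ρ : X → Matrix Q Q ℂ)
    (hp : ∀ x, 0 < p x) (hp1 : (∑ x, p x) = 1) (hρ : ∀ x, IsDensity (ρ x))
    (pmx : X → O → ℝ) (hpmx : ∀ x m, pmx x m = (E m (ρ x)).trace.re)
    (pm : O → ℝ) (hpm : ∀ m, pm m = ∑ x, p x * pmx x m)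
    (Iinfo : ℝ)
    (hI : Iinfo = ∑ x, ∑ m, p x * pmx x m * Real.logb 2 (pmx x m / pm m))
    (chiBar : O → ℝ)
    (hchi : ∀ m, chiBar m =
      entropy (((pm m)⁻¹ : ℝ) • E m (∑ x, (p x : ℂ) • ρ x)) -
        ∑ x, (p x * pmx x m / pm m) * entropy (((pmx x m)⁻¹ : ℝ) • E m (ρ x))) :
    entropyDefect p (fun x => instrApply E (ρ x)) =
      Iinfo + ∑ m, pm m * chiBar m := by
  classical
  have hCP : ∀ m (σ : Matrix Q Q ℂ), σ.PosSemidef → (E m σ).PosSemidef :=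
    fun m σ hσ => aux12_cp_posSemidef (E m) (hE.1 m) hσ
  have hρx : ∀ x, (ρ x).PosSemidef := fun x => (hρ x).1
  set ρs := ∑ x, (p x : ℂ) • ρ x with hρsdef
  have hρsPSD : ρs.PosSemidef := by
    rw [hρsdef]
    exact aux12_psd_sum _ (fun x => by
      rw [← aux12_realSmul_eq]
      rw [aux12_realSmul_eq]
      exact aux12_psd_smul (hρx x) (hp x).le)
  have hFx : ∀ x m, (E m (ρ x)).PosSemidef := fun x m => hCP m _ (hρx x)
  have hFs : ∀ m, (E m ρs).PosSemidef := fun m => hCP m _ hρsPSD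
  have htrx : ∀ x m, (E m (ρ x)).trace.re = pmx x m := fun x m => (hpmx x m).symm
  have hnn : ∀ x m, 0 ≤ pmx x m := fun x m => by
    rw [hpmx]; exact aux12_traceRe_nonneg (hFx x m)
  have htrs : ∀ m, (E m ρs).trace.re = pm m := by
    intro m
    have h1 : E m ρs = ∑ x, (p x : ℂ) • E m (ρ x) := by
      rw [hρsdef, map_sum]
      exact Finset.sum_congr rfl fun x _ => (E m).map_smul _ _
    have h2 : ∀ x, ((p x : ℂ) • E m (ρ x)).trace = ((p x * pmx x m : ℝ) : ℂ) := by
      intro x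
      rw [Matrix.trace_smul, smul_eq_mul, aux12_trace_eq_re (hFx x m).1, htrx]
      push_cast
      ring
    rw [h1, Matrix.trace_sum, Finset.sum_congr rfl fun x _ => h2 x, ← Complex.ofReal_sum,
      Complex.ofReal_re, hpm m]
  have hzero : ∀ m, pm m = 0 → ∀ x, pmx x m = 0 := by
    intro m h0 x
    have hterms : ∀ x' ∈ Finset.univ, (0 : ℝ) ≤ p x' * pmx x' m :=
      fun x' _ => mul_nonneg (hp x').le (hnn x' m)
    have hx := (Finset.sum_eq_zero_iff_of_nonneg hterms).mp (by rw [← hpm m, h0]) x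
      (Finset.mem_univ x)
    rcases mul_eq_zero.mp hx with h | h
    · exact absurd h (ne_of_gt (hp x))
    · exact h
  have hEnt_x : ∀ x, entropy (instrApply E (ρ x))
      = ∑ m, (pmx x m * entropy (((pmx x m)⁻¹ : ℝ) • E m (ρ x))
        + Real.negMulLog (pmx x m) / Real.log 2) := by
    intro x
    have : instrApply E (ρ x) = aux12_blockish (fun m => E m (ρ x)) := rfl
    rw [this, aux12_entropy_blockish _ (fun m => hFx x m)]
    exact Finset.sum_congr rfl fun m _ => by rw [htrx]
  have havg : (∑ x, (p x : ℂ) • instrApply E (ρ x)) = aux12_blockish (fun m => E m ρs) := by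
    ext pp qq
    have hentry : ∀ x, ((p x : ℂ) • instrApply E (ρ x)) pp qq
        = if pp.2 = qq.2 then (p x : ℂ) * E pp.2 (ρ x) pp.1 qq.1 else 0 := by
      intro x
      by_cases h : pp.2 = qq.2
      · simp [instrApply, h, Matrix.smul_apply]
      · simp [instrApply, h, Matrix.smul_apply]
    rw [Matrix.sum_apply, Finset.sum_congr rfl fun x _ => hentry x]
    have hrhs : aux12_blockish (fun m => E m ρs) pp qq
        = if pp.2 = qq.2 then E pp.2 ρs pp.1 qq.1 else 0 := rfl
    rw [hrhs]
    by_cases h : pp.2 = qq.2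
    · rw [if_pos h, Finset.sum_congr rfl fun x (_ : x ∈ Finset.univ) => if_pos h]
      have h1 : E pp.2 ρs = ∑ x, (p x : ℂ) • E pp.2 (ρ x) := by
        rw [hρsdef, map_sum]
        exact Finset.sum_congr rfl fun x _ => (E pp.2).map_smul _ _
      rw [h1, Matrix.sum_apply]
      exact Finset.sum_congr rfl fun x _ => by simp [Matrix.smul_apply]
    · simp [h]
  have hEnt_s : entropy (∑ x, (p x : ℂ) • instrApply E (ρ x))
      = ∑ m, (pm m * entropy (((pm m)⁻¹ : ℝ) • E m ρs)
        + Real.negMulLog (pm m) / Real.log 2) := by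
    rw [havg, aux12_entropy_blockish _ hFs]
    exact Finset.sum_congr rfl fun m _ => by rw [htrs]
  have hc : ∀ m, pm m * ∑ x, (p x * pmx x m / pm m) * entropy (((pmx x m)⁻¹ : ℝ) • E m (ρ x))
      = ∑ x, p x * pmx x m * entropy (((pmx x m)⁻¹ : ℝ) • E m (ρ x)) := by
    intro m
    rcases eq_or_ne (pm m) 0 with h0 | hne
    · rw [h0, zero_mul]
      symm
      apply Finset.sum_eq_zero
      intro x _
      rw [hzero m h0 x]
      ring
    · rw [Finset.mul_sum]
      refine Finset.sum_congr rfl fun x _ => ?_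
      field_simp
  have hI' : ∑ m, Real.negMulLog (pm m) / Real.log 2
      - ∑ x, p x * ∑ m, Real.negMulLog (pmx x m) / Real.log 2 = Iinfo := by
    rw [aux12_info_identity p pmx pm hp hnn hpm, hI]
  rw [entropyDefect, hEnt_s,
    Finset.sum_congr rfl fun x (_ : x ∈ Finset.univ) => congrArg (p x * ·) (hEnt_x x),
    Finset.sum_congr rfl fun m (_ : m ∈ Finset.univ) => congrArg (pm m * ·) (hchi m)]
  exact aux12_final_arith p pmx pm
    (fun m => entropy (((pm m)⁻¹ : ℝ) • E m ρs))
    (fun x m => entropy (((pmx x m)⁻¹ : ℝ) • E m (ρ x))) Iinfo (Real.log 2) hc hI'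

end QID
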